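/- Let p be an odd prime, q = p^m, and let g be an integer with g ≥ max{(q−1)/2, 2}, gcd(2g+2, q−1) = 2 and ⌊(2g+2)/(q−1)⌋ = 1. Assume that at least one of the following holds: (1) q is a square (m is even); (2) m is odd and p ≡ 1 (mod 8); (3) there is no integer k ≥ 0 with 4g = p(2k+1) − 5. Then there exists a nonzero element a of the prime subfield F_p ⊆ F_q such that the polynomial f(X) = X^{2g+2} − X^{2g+2−(q−1)} + a² ∈ F_q[X] is squarefree; moreover f(x) = a², a nonzero square, for every x ∈ F_q (so y² = f(x) is a smooth F_q-maximal hyperelliptic curve of genus g defined over F_p). -/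

import Mathlib

open Polynomial

lemma aux_sum_parity (p m : ℕ) (hp : p % 2 = 1) :
    (∑ i ∈ Finset.range m, p ^ i) % 2 = m % 2 := by
  induction m with
  | zero => simp
  | succ k ih =>
      rw [Finset.sum_range_succ]
      have hpk : p ^ k % 2 = 1 := Nat.odd_iff.mp ((Nat.odd_iff.mpr hp).pow)
      omega

lemma aux_geom (p m : ℕ) (hp : 1 ≤ p) :
    (p - 1) * (∑ i ∈ Finset.range m, p ^ i) = p ^ m - 1 := by
  have hz := geom_sum_mul (p : ℤ) m
  have h1 : 1 ≤ p ^ m := Nat.one_le_pow _ _ hp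
  zify [hp, h1]
  push_cast at hz ⊢
  linear_combination hz

/-- The case `gcd(2g+2,q−1) = 2`, `⌊(2g+2)/(q−1)⌋ = 1`, under one of the three
extra assumptions: `q` a square, or `m` odd and `p ≡ 1 (mod 8)`, or `4g ≠ p(2k+1) − 5` for all
`k ≥ 0`. -/
theorem stmt_8 (p : ℕ) (hp : p.Prime) (hodd : Odd p) (m : ℕ)
    (K : Type*) [Field K] [Fintype K] [CharP K p]
    (q : ℕ) (hq : q = p ^ m) (hcard : Fintype.card K = q)
    (g : ℕ) (hg : g ≥ max ((q - 1) / 2) 2)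
    (hgcd : Nat.gcd (2 * g + 2) (q - 1) = 2)
    (hL : (2 * g + 2) / (q - 1) = 1)
    (hcase : Even m ∨ (Odd m ∧ p % 8 = 1) ∨ ¬ ∃ k : ℕ, (4 * g : ℤ) = p * (2 * k + 1) - 5) :
    ∃ a : K, a ≠ 0 ∧ (∃ a₀ : ZMod p, a = ZMod.castHom (dvd_refl p) K a₀) ∧
      Squarefree ((X : Polynomial K) ^ (2 * g + 2)
          - X ^ (2 * g + 2 - (q - 1)) + C (a ^ 2)) ∧
      ∀ x : K, ((X : Polynomial K) ^ (2 * g + 2)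
          - X ^ (2 * g + 2 - (q - 1)) + C (a ^ 2)).eval x = a ^ 2 := by
  classical
  haveI : Fact p.Prime := ⟨hp⟩
  have hp2 : p % 2 = 1 := Nat.odd_iff.mp hodd
  have hp3 : 3 ≤ p := by have := hp.two_le; omega
  have hg2 : 2 ≤ g := le_trans (le_max_right _ _) hg
  have hm : m ≠ 0 := by
    rintro rfl
    rw [pow_zero] at hq
    subst hq
    simp at hL
  have hq3 : 3 ≤ q := by
    rw [hq]
    calc 3 ≤ p := hp3
    _ ≤ p ^ m := Nat.le_self_pow hm p
  have hqodd : q % 2 = 1 := Nat.odd_iff.mp (hq ▸ hodd.pow)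
  set n := 2 * g + 2 - (q - 1) with hn
  have hDn : 2 * g + 2 = (q - 1) + n ∧ n < q - 1 := by
    have h1 := Nat.div_add_mod (2 * g + 2) (q - 1)
    rw [hL, mul_one] at h1
    have h2 := Nat.mod_lt (2 * g + 2) (show 0 < q - 1 by omega)
    omega
  obtain ⟨hDn, hnlt⟩ := hDn
  have hgcd2 : Nat.gcd n (q - 1) = 2 := by
    rw [hDn, add_comm, Nat.gcd_add_self_left] at hgcd
    exact hgcd
  have hneven : n % 2 = 0 := by omega
  have hnpos : 2 ≤ n := by
    rcases Nat.eq_zero_or_pos n with h0 | h1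
    · rw [h0, Nat.gcd_zero_left] at hgcd2
      omega
    · omega
  -- the evaluation statement
  have heval : ∀ x : K,
      ((X : Polynomial K) ^ (2 * g + 2) - X ^ n + C ((1:K) ^ 2)).eval x = (1:K) ^ 2 := by
    intro x
    simp only [eval_add, eval_sub, eval_pow, eval_X, eval_C, one_pow]
    by_cases hx : x = 0
    · subst hx
      rw [zero_pow (by omega), zero_pow (by omega)]
      ring
    · have hcd : q - 1 = Fintype.card K - 1 := by rw [hcard]
      rw [hDn, pow_add, hcd, FiniteField.pow_card_sub_one_eq_one x hx]
      ring
  -- separability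
  have hsep : ((X : Polynomial K) ^ (2 * g + 2) - X ^ n + C ((1:K) ^ 2)).Separable := by
    rw [Polynomial.separable_def]
    by_contra hcop
    set f : Polynomial K := X ^ (2 * g + 2) - X ^ n + C ((1:K) ^ 2) with hf
    have hf0 : f ≠ 0 := by
      intro h0
      have h1 := heval 0
      rw [h0] at h1
      simp at h1
    have hgu : ¬ IsUnit (EuclideanDomain.gcd f (derivative f)) := by
      rw [EuclideanDomain.gcd_isUnit_iff]
      exact hcop
    have hg0 : EuclideanDomain.gcd f (derivative f) ≠ 0 := by
      intro h0
      exact hf0 (EuclideanDomain.gcd_eq_zero_iff.mp h0).1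
    obtain ⟨h, hirr, hdvd⟩ := WfDvdMonoid.exists_irreducible_factor hgu hg0
    have hhf : h ∣ f := hdvd.trans (EuclideanDomain.gcd_dvd_left _ _)
    have hhf' : h ∣ derivative f := hdvd.trans (EuclideanDomain.gcd_dvd_right _ _)
    haveI : Fact (Irreducible h) := ⟨hirr⟩
    set L := AdjoinRoot h with hL'
    set x := AdjoinRoot.root h with hx'
    set φ := algebraMap K L with hφ'
    have hinj : Function.Injective φ := φ.injective
    have hx_f : aeval x f = 0 := by
      rw [AdjoinRoot.aeval_eq, AdjoinRoot.mk_eq_zero]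
      exact hhf
    have hx_f' : aeval x (derivative f) = 0 := by
      rw [AdjoinRoot.aeval_eq, AdjoinRoot.mk_eq_zero]
      exact hhf'
    have e1 : x ^ (2 * g + 2) - x ^ n + 1 = 0 := by
      rw [hf] at hx_f
      simpa using hx_f
    have hder : derivative f
        = C ((2 * g + 2 : ℕ) : K) * X ^ (2 * g + 2 - 1) - C ((n : ℕ) : K) * X ^ (n - 1) := by
      rw [hf]
      simp [derivative_X_pow]
      rw [show (C (2:K)) = 2 from map_ofNat C 2]; ring
    have e2 : φ ((2 * g + 2 : ℕ) : K) * x ^ (2 * g + 2) = φ ((n : ℕ) : K) * x ^ n := by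
      rw [hder] at hx_f'
      simp only [map_sub, map_mul, aeval_C, map_pow, aeval_X] at hx_f'
      have h1 : φ ((2 * g + 2 : ℕ) : K) * x ^ (2 * g + 2 - 1)
          = φ ((n : ℕ) : K) * x ^ (n - 1) := sub_eq_zero.mp hx_f'
      have h2 := congrArg (· * x) h1
      calc φ ((2 * g + 2 : ℕ) : K) * x ^ (2 * g + 2)
          = φ ((2 * g + 2 : ℕ) : K) * x ^ (2 * g + 2 - 1) * x := by
            have he : 2 * g + 2 - 1 + 1 = 2 * g + 2 := by omega
            rw [mul_assoc, ← pow_succ, he]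
        _ = φ ((n : ℕ) : K) * x ^ (n - 1) * x := h2
        _ = φ ((n : ℕ) : K) * x ^ n := by
            have he : n - 1 + 1 = n := by omega
            rw [mul_assoc, ← pow_succ, he]
    have hx0 : x ≠ 0 := by
      intro h0
      rw [h0, zero_pow (by omega : 2 * g + 2 ≠ 0), zero_pow (by omega : n ≠ 0)] at e1
      simp at e1
    -- cast facts
    have hqK : ((q : ℕ) : K) = 0 := by
      rw [hq]
      push_cast
      rw [CharP.cast_eq_zero K p]
      exact zero_pow hm
    have hq1K : ((q - 1 : ℕ) : K) = -1 := by
      rw [Nat.cast_sub (by omega : 1 ≤ q), hqK]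
      ring
    set N : K := ((n : ℕ) : K) with hN'
    have hDK : ((2 * g + 2 : ℕ) : K) = N - 1 := by
      rw [hDn, Nat.cast_add, hq1K]
      ring
    by_cases hN1 : N = 1
    · -- then D-coefficient is zero and x^n = 0
      rw [hDK, hN1, sub_self, map_zero, zero_mul, map_one, one_mul] at e2
      exact hx0 (pow_eq_zero_iff (by omega : n ≠ 0) |>.mp e2.symm)
    by_cases hN0 : N = 0
    · rw [hDK, hN0, map_zero, zero_mul] at e2
      have : φ ((0:K) - 1) ≠ 0 := by
        simp only [zero_sub, map_neg, map_one]
        intro hcontra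
        exact one_ne_zero (neg_eq_zero.mp hcontra)
      have hxD : x ^ (2 * g + 2) = 0 := by
        rcases mul_eq_zero.mp e2 with h0 | h0
        · exact absurd h0 this
        · exact h0
      exact hx0 (pow_eq_zero_iff (by omega : 2 * g + 2 ≠ 0) |>.mp hxD)
    -- main case
    have hN1' : N - 1 ≠ 0 := fun h0 => hN1 (by linear_combination h0)
    set c : K := N / (N - 1) with hc'
    have hc0 : c ≠ 0 := div_ne_zero hN0 hN1'
    have hcq : x ^ (q - 1) = φ c := by
      have hxD : x ^ (2 * g + 2) = x ^ (q - 1) * x ^ n := by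
        rw [hDn, pow_add]
      rw [hxD, hDK] at e2
      have e2' : φ (N - 1) * x ^ (q - 1) * x ^ n = φ N * x ^ n := by
        rw [mul_assoc]; exact e2
      have h1 := mul_right_cancel₀ (pow_ne_zero n hx0) e2'
      have h2 : φ (N - 1) ≠ 0 := fun h0 => hN1' (hinj (by rw [h0, map_zero]))
      have h3 : x ^ (q - 1) = φ N / φ (N - 1) := by
        rw [eq_div_iff h2, mul_comm]
        exact h1
      rw [h3, ← map_div₀, hc']
    have hcne1 : c ≠ 1 := by
      intro h0
      rw [hc', div_eq_one_iff_eq hN1'] at h0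
      have : (1 : K) = 0 := by linear_combination h0
      exact one_ne_zero this
    have h1c : (1 : K) - c ≠ 0 := fun h0 => hcne1 (by linear_combination -h0)
    set b : K := (1 - c)⁻¹ with hb'
    have hb0 : b ≠ 0 := inv_ne_zero h1c
    have hbn : x ^ n = φ b := by
      have hxD : x ^ (2 * g + 2) = φ c * x ^ n := by
        rw [hDn, pow_add, hcq, mul_comm]
      rw [hxD] at e1
      have h1 : x ^ n * (φ c - 1) = -1 := by linear_combination e1
      have h2 : φ c - 1 ≠ 0 := by
        intro h0
        rw [h0, mul_zero] at h1
        exact one_ne_zero (neg_eq_zero.mp h1.symm)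
      have h3 : x ^ n = -(φ c - 1)⁻¹ := by
        field_simp at h1 ⊢
        linear_combination h1
      rw [h3, hb', map_inv₀, map_sub, map_one]
      rw [neg_inv]
      congr 1
      ring
    -- Bezout
    have hbez := Nat.gcd_eq_gcd_ab n (q - 1)
    rw [hgcd2] at hbez
    set A := Nat.gcdA n (q - 1) with hA'
    set B := Nat.gcdB n (q - 1) with hB'
    set w : K := b ^ A * c ^ B with hw'
    have hw0 : w ≠ 0 := mul_ne_zero (zpow_ne_zero A hb0) (zpow_ne_zero B hc0)
    have hxw : x ^ 2 = φ w := by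
      have h1 : (x ^ n) ^ A * (x ^ (q - 1)) ^ B = x ^ (2 : ℤ) := by
        rw [← zpow_natCast x n, ← zpow_natCast x (q - 1)]
        rw [← zpow_mul, ← zpow_mul, ← zpow_add₀ hx0]
        congr 1
        exact_mod_cast hbez.symm
      rw [hbn, hcq] at h1
      rw [show ((2:ℤ) = ((2:ℕ):ℤ)) by norm_num, zpow_natCast] at h1
      rw [← h1, hw', map_mul, map_zpow₀, map_zpow₀]
    have hcw : c = w ^ ((q - 1) / 2) := by
      apply hinj
      rw [map_pow, ← hxw, ← pow_mul, ← hcq]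
      congr 1
      omega
    have hbw : b = w ^ (n / 2) := by
      apply hinj
      rw [map_pow, ← hxw, ← pow_mul, ← hbn]
      congr 1
      omega
    have hwq : w ^ (q - 1) = 1 := by
      have hcd : q - 1 = Fintype.card K - 1 := by rw [hcard]
      rw [hcd]
      exact FiniteField.pow_card_sub_one_eq_one w hw0
    have hc2 : c ^ 2 = 1 := by
      rw [hcw, ← pow_mul]
      rw [show (q - 1) / 2 * 2 = q - 1 by omega]
      exact hwq
    have hcm1 : c = -1 := by
      have hfac : (c - 1) * (c + 1) = 0 := by linear_combination hc2
      rcases mul_eq_zero.mp hfac with h0 | h0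
      · exact absurd (by linear_combination h0) hcne1
      · linear_combination h0
    -- now c = -1 : branch on hcase
    have h2K : (2 : K) ≠ 0 := by
      intro h0
      have := (CharP.cast_eq_zero_iff K p 2).mp (by exact_mod_cast h0)
      have := Nat.le_of_dvd (by norm_num) this
      omega
    have h2N : 2 * N = 1 := by
      have : N = -(N - 1) := by
        rw [hc', div_eq_iff hN1'] at hcm1
        linear_combination hcm1
      linear_combination this
    rcases hcase with hcase | hcase | hcase
    · -- m even : show 2 is a square so b^((q-1)/2) = 1, contradiction with -1
      -- first 4 ∣ q - 1
      obtain ⟨j, hj⟩ := hcase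
      have h4 : 4 ∣ q - 1 := by
        obtain ⟨k, hk⟩ := (hodd.pow : Odd (p ^ j))
        have hqq : q = (2 * k + 1) * (2 * k + 1) := by
          rw [hq, hj, ← hk, ← pow_add]
        have : (2 * k + 1) * (2 * k + 1) = 4 * (k * k + k) + 1 := by ring
        omega
      -- 2^((q-1)/2) = 1
      have h2pow : (2 : K) ^ ((q - 1) / 2) = 1 := by
        set s := ∑ i ∈ Finset.range m, p ^ i with hs'
        have hges : (p - 1) * s = q - 1 := by rw [hq]; exact aux_geom p m (by omega)
        have hspar : s % 2 = m % 2 := aux_sum_parity p m hp2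
        have hhalf : (q - 1) / 2 = (p - 1) / 2 * s := by
          obtain ⟨u, hu⟩ : ∃ u, p - 1 = 2 * u := ⟨(p - 1) / 2, by omega⟩
          have h1 : q - 1 = 2 * (u * s) := by rw [← hges, hu]; ring
          have h2 : (p - 1) / 2 = u := by omega
          rw [h1, h2, Nat.mul_div_cancel_left _ (by norm_num : 0 < 2)]
        have hF : (2 : K) ^ (p - 1) = 1 := by
          have h2ne : (2 : ZMod p) ≠ 0 := by
            intro h0
            have := (ZMod.natCast_eq_zero_iff 2 p).mp (by exact_mod_cast h0)
            have := Nat.le_of_dvd (by norm_num) this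
            omega
          have hFz : (2 : ZMod p) ^ (p - 1) = 1 := ZMod.pow_card_sub_one_eq_one h2ne
          have := congrArg (ZMod.castHom (dvd_refl p) K) hFz
          rw [map_pow, map_one] at this
          rw [show ((ZMod.castHom (dvd_refl p) K) (2 : ZMod p)) = (2 : K) by
            rw [show ((2 : ZMod p) = ((2:ℕ) : ZMod p)) by norm_cast, map_natCast]
            norm_cast] at this
          exact this
        have hse : s % 2 = 0 := by
          have : m % 2 = 0 := by omega
          omega
        rw [hhalf, pow_mul]
        obtain ⟨t, ht⟩ : ∃ t, s = 2 * t := ⟨s / 2, by omega⟩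
        have ha : ((2:K) ^ ((p - 1) / 2)) ^ 2 = 1 := by
          rw [← pow_mul, show (p - 1) / 2 * 2 = p - 1 by omega, hF]
        rw [ht, pow_mul, ha, one_pow]
      -- n/2 odd
      have hn4 : ¬ (4 ∣ n) := by
        intro h4n
        have := Nat.dvd_gcd h4n h4
        rw [hgcd2] at this
        have := Nat.le_of_dvd (by norm_num) this
        omega
      have hn2odd : Odd (n / 2) := by
        rw [Nat.odd_iff]
        have : n % 4 ≠ 0 := fun h0 => hn4 (Nat.dvd_iff_mod_eq_zero.mpr h0)
        omega
      have hbval : b ^ ((q - 1) / 2) = -1 := by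
        rw [hbw, ← pow_mul, mul_comm (n/2), pow_mul, ← hcw, hcm1]
        exact hn2odd.neg_one_pow
      have hbval2 : b ^ ((q - 1) / 2) = 1 := by
        have hbinv : b = (2 : K)⁻¹ := by
          rw [hb', hcm1]
          norm_num
        rw [hbinv, inv_pow, h2pow, inv_one]
      rw [hbval] at hbval2
      exact h2K (by linear_combination -hbval2)
    · -- m odd, p ≡ 1 mod 8
      obtain ⟨_, hp8⟩ := hcase
      have h4 : 4 ∣ q - 1 := by
        have hmod : p ^ m % 4 = 1 := by
          rw [Nat.pow_mod, show p % 4 = 1 by omega, one_pow]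
          norm_num
        rw [hq]
        omega
      have h2pow : (2 : K) ^ ((q - 1) / 2) = 1 := by
        set s := ∑ i ∈ Finset.range m, p ^ i with hs'
        have hges : (p - 1) * s = q - 1 := by rw [hq]; exact aux_geom p m (by omega)
        have hhalf : (q - 1) / 2 = (p - 1) / 2 * s := by
          obtain ⟨u, hu⟩ : ∃ u, p - 1 = 2 * u := ⟨(p - 1) / 2, by omega⟩
          have h1 : q - 1 = 2 * (u * s) := by rw [← hges, hu]; ring
          have h2 : (p - 1) / 2 = u := by omega
          rw [h1, h2, Nat.mul_div_cancel_left _ (by norm_num : 0 < 2)]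
        have h2ne : (2 : ZMod p) ≠ 0 := by
          intro h0
          have := (ZMod.natCast_eq_zero_iff 2 p).mp (by exact_mod_cast h0)
          have := Nat.le_of_dvd (by norm_num) this
          omega
        have hsq : IsSquare (2 : ZMod p) :=
          (ZMod.exists_sq_eq_two_iff (show p ≠ 2 by omega)).mpr (Or.inl hp8)
        have hεZ : (2 : ZMod p) ^ (p / 2) = 1 := (ZMod.euler_criterion p h2ne).mp hsq
        have hε : (2 : K) ^ ((p - 1) / 2) = 1 := by
          have := congrArg (ZMod.castHom (dvd_refl p) K) hεZ
          rw [map_pow, map_one] at this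
          rw [show ((ZMod.castHom (dvd_refl p) K) (2 : ZMod p)) = (2 : K) by
            rw [show ((2 : ZMod p) = ((2:ℕ) : ZMod p)) by norm_cast, map_natCast]
            norm_cast] at this
          rw [show (p - 1) / 2 = p / 2 by omega]
          exact this
        rw [hhalf, pow_mul, hε, one_pow]
      have hn4 : ¬ (4 ∣ n) := by
        intro h4n
        have := Nat.dvd_gcd h4n h4
        rw [hgcd2] at this
        have := Nat.le_of_dvd (by norm_num) this
        omega
      have hn2odd : Odd (n / 2) := by
        rw [Nat.odd_iff]
        have : n % 4 ≠ 0 := fun h0 => hn4 (Nat.dvd_iff_mod_eq_zero.mpr h0)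
        omega
      have hbval : b ^ ((q - 1) / 2) = -1 := by
        rw [hbw, ← pow_mul, mul_comm (n/2), pow_mul, ← hcw, hcm1]
        exact hn2odd.neg_one_pow
      have hbval2 : b ^ ((q - 1) / 2) = 1 := by
        have hbinv : b = (2 : K)⁻¹ := by
          rw [hb', hcm1]
          norm_num
        rw [hbinv, inv_pow, h2pow, inv_one]
      rw [hbval] at hbval2
      exact h2K (by linear_combination -hbval2)
    · -- no k with 4g = p(2k+1) - 5
      have hzero : ((4 * g + 5 : ℕ) : K) = 0 := by
        push_cast
        have hDK' : 2 * (g : K) + 2 = N - 1 := by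
          have h := hDK
          push_cast at h
          exact h
        linear_combination 2 * hDK' + h2N
      have hdiv : p ∣ 4 * g + 5 := (CharP.cast_eq_zero_iff K p _).mp hzero
      obtain ⟨t, ht⟩ := hdiv
      have htodd : Odd t := by
        have h1 : Odd (4 * g + 5) := ⟨2 * g + 2, by ring⟩
        rw [ht] at h1
        exact (Nat.odd_mul.mp h1).2
      obtain ⟨k, hk⟩ := htodd
      apply hcase
      refine ⟨k, ?_⟩
      have : ((4 * g + 5 : ℕ) : ℤ) = (p : ℤ) * (2 * k + 1) := by
        rw [ht, hk]
        push_cast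
        ring
      push_cast at this
      linarith
  exact ⟨1, one_ne_zero, ⟨1, by simp⟩, hsep.squarefree, heval⟩
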